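/- Let (R, ≤) be a Strassen preordered commutative semiring and f : R → ℝ_{≥0} a function that is monotone, superadditive, supermultiplicative, monomially homogeneous, and monomially dominant. Then, setting 𝒵 = { φ : φ is a spectral point of (R,≤) and φ(a) ≥ f(a) for all a ∈ R }, for every a ∈ R there exists φ ∈ 𝒵 with φ(a) = f(a); in particular f(a) = min{ φ(a) : φ ∈ 𝒵 } for every a ∈ R. -/

import Mathlib

open scoped BigOperators

namespace Paper

/-- `(R, le)` is a Strassen preordered commutative semiring. -/
structure IsStrassenPreorder (R : Type*) [CommSemiring R] (le : R → R → Prop) : Prop where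
  refl : ∀ a, le a a
  trans : ∀ a b c, le a b → le b c → le a c
  zero_le : ∀ a, le 0 a
  add_right : ∀ a b c, le a b → le (a + c) (b + c)
  mul_right : ∀ a b c, le a b → le (a * c) (b * c)
  arch : ∀ a : R, a ≠ 0 → ∃ n : ℕ, le 1 a ∧ le a (n : R)
  nat_le_iff : ∀ n m : ℕ, (le (n : R) (m : R) ↔ n ≤ m)

/-- A spectral point of `(R, le)`: a normalized, additive, multiplicative, monotone
functional `R → ℝ_{≥0}`. -/
structure IsSpectralPoint (R : Type*) [CommSemiring R] (le : R → R → Prop)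
    (φ : R → ℝ) : Prop where
  nonneg : ∀ a, 0 ≤ φ a
  map_one : φ 1 = 1
  map_add : ∀ a b, φ (a + b) = φ a + φ b
  map_mul : ∀ a b, φ (a * b) = φ a * φ b
  monotone : ∀ a b, le a b → φ a ≤ φ b

/-! ### Auxiliary sSup lemmas -/

lemma sSup_add_le' {A B : Set ℝ} {C : ℝ} (hA : A.Nonempty) (hB : B.Nonempty)
    (h : ∀ x ∈ A, ∀ y ∈ B, x + y ≤ C) : sSup A + sSup B ≤ C := by
  have h1 : ∀ x ∈ A, x ≤ C - sSup B := by
    intro x hx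
    have : sSup B ≤ C - x := csSup_le hB (fun y hy => by linarith [h x hx y hy])
    linarith
  have h2 : sSup A ≤ C - sSup B := csSup_le hA h1
  linarith

lemma sSup_mul_le' {A B : Set ℝ} {C : ℝ} (hA : A.Nonempty) (hB : B.Nonempty)
    (hbB : BddAbove B)
    (hA0 : ∀ x ∈ A, 0 ≤ x) (hB0 : ∀ y ∈ B, 0 ≤ y) (hC : 0 ≤ C)
    (h : ∀ x ∈ A, ∀ y ∈ B, x * y ≤ C) : sSup A * sSup B ≤ C := by
  have key : ∀ x ∈ A, x * sSup B ≤ C := by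
    intro x hx
    rcases eq_or_lt_of_le (hA0 x hx) with h0 | hpos
    · rw [← h0, zero_mul]; exact hC
    · have hs : sSup B ≤ C / x := csSup_le hB (fun y hy => (le_div_iff₀ hpos).2
        (by rw [mul_comm]; exact h x hx y hy))
      calc x * sSup B ≤ x * (C / x) := mul_le_mul_of_nonneg_left hs hpos.le
        _ = C := by field_simp
  have hsB : 0 ≤ sSup B := by
    obtain ⟨y, hy⟩ := hB
    exact le_trans (hB0 y hy) (le_csSup hbB hy)
  rcases eq_or_lt_of_le hsB with h0 | hpos
  · rw [← h0, mul_zero]; exact hC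
  · have : sSup A ≤ C / sSup B := csSup_le hA (fun x hx => (le_div_iff₀ hpos).2 (key x hx))
    calc sSup A * sSup B ≤ (C / sSup B) * sSup B := mul_le_mul_of_nonneg_right this hpos.le
      _ = C := by field_simp

lemma sSup_const_mul' {A : Set ℝ} (hA : A.Nonempty) (hbA : BddAbove A) {c : ℝ} (hc : 0 ≤ c) :
    sSup ((fun x => c * x) '' A) = c * sSup A := by
  rcases eq_or_lt_of_le hc with h0 | hpos
  · have himg : ((fun x => c * x) '' A) = {0} := by
      rw [← h0]; simpa [zero_mul] using hA.image_const (0 : ℝ)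
    rw [himg, csSup_singleton, ← h0, zero_mul]
  · have hbimg : BddAbove ((fun x => c * x) '' A) := by
      obtain ⟨M, hM⟩ := hbA
      exact ⟨c * M, by rintro _ ⟨x, hx, rfl⟩; exact mul_le_mul_of_nonneg_left (hM hx) hpos.le⟩
    apply le_antisymm
    · apply csSup_le (hA.image _)
      rintro _ ⟨x, hx, rfl⟩
      exact mul_le_mul_of_nonneg_left (le_csSup hbA hx) hpos.le
    · rw [mul_comm, ← le_div_iff₀ hpos]
      apply csSup_le hA
      intro x hx
      rw [le_div_iff₀ hpos, mul_comm]
      exact le_csSup hbimg ⟨x, hx, rfl⟩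

lemma rpow_half_mul' (ε : ℝ) (n : ℕ) :
    (2:ℝ) ^ (-(ε/2 * n)) * ((2:ℝ) ^ (-(ε/2))) ^ n = (2:ℝ) ^ (-(ε * n)) := by
  rw [← Real.rpow_natCast ((2:ℝ) ^ (-(ε/2))) n, ← Real.rpow_mul (by norm_num : (0:ℝ) ≤ 2),
    ← Real.rpow_add (by norm_num : (0:ℝ) < 2)]
  congr 1; ring

lemma choose_mul_le_add_pow' {x y : ℝ} (hx : 0 ≤ x) (hy : 0 ≤ y) {n k : ℕ} (hk : k ≤ n) :
    (n.choose k : ℝ) * (x ^ k * y ^ (n - k)) ≤ (x + y) ^ n := by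
  rw [add_pow]
  have hmem : k ∈ Finset.range (n+1) := Finset.mem_range.2 (Nat.lt_succ_of_le hk)
  have h := Finset.single_le_sum (f := fun m => x ^ m * y ^ (n - m) * (n.choose m : ℝ))
    (fun i _ => by positivity) hmem
  calc (n.choose k : ℝ) * (x ^ k * y ^ (n - k))
      = x ^ k * y ^ (n - k) * (n.choose k : ℝ) := by ring
    _ ≤ _ := h

/-! ### The class of good functions -/

structure GoodFun (R : Type) [CommSemiring R] (le : R → R → Prop) (f : R → ℝ) (a : R)
    (g : R → ℝ) : Prop where
  nonneg : ∀ x, 0 ≤ g x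
  mono : ∀ x y, le x y → g x ≤ g y
  superadd : ∀ x y, g x + g y ≤ g (x + y)
  supermul : ∀ x y, g x * g y ≤ g (x * y)
  natmul : ∀ (p : ℕ) (x : R), g ((p : R) * x) = p * g x
  pow_le : ∀ (q : ℕ) (x : R), g (x ^ q) ≤ g x ^ q
  gone : g 1 = 1
  dom : ∀ s t : R, ∀ ε : ℝ, 0 < ε → ∃ N : ℕ, ∀ n : ℕ, N ≤ n → ∃ k ≤ n,
    (2 : ℝ) ^ (-(ε * (n : ℝ))) * (g (s + t)) ^ n
      ≤ (n.choose k : ℝ) * g (s ^ k * t ^ (n - k))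
  ge_f : ∀ x, f x ≤ g x
  at_a : g a = f a

namespace GoodFun

variable {R : Type} [CommSemiring R] {le : R → R → Prop} {f : R → ℝ} {a : R} {g : R → ℝ}

lemma gzero (hg : GoodFun R le f a g) : g 0 = 0 := by
  have h := hg.natmul 0 1
  simpa using h

lemma pow_eq (hg : GoodFun R le f a g) (q : ℕ) (x : R) : g (x ^ q) = g x ^ q := by
  induction q with
  | zero => simpa using hg.gone
  | succ q ih =>
    refine le_antisymm (hg.pow_le _ x) ?_
    calc g x ^ (q+1) = g (x ^ q) * g x := by rw [ih]; ring
      _ ≤ g (x ^ q * x) := hg.supermul _ _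
      _ = g (x ^ (q+1)) := by rw [← pow_succ]

lemma gnat (hg : GoodFun R le f a g) (p : ℕ) : g (p : R) = p := by
  have h := hg.natmul p 1
  simpa [hg.gone] using h

lemma ge_one (hg : GoodFun R le f a g) (hR : IsStrassenPreorder R le) {x : R} (hx : x ≠ 0) :
    1 ≤ g x := by
  obtain ⟨n, h1, _⟩ := hR.arch x hx
  have := hg.mono 1 x h1
  rwa [hg.gone] at this

lemma eq_zero_of_g_eq_zero (hg : GoodFun R le f a g) (hR : IsStrassenPreorder R le) {x : R}
    (hx : g x = 0) : x = 0 := by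
  by_contra h
  have := hg.ge_one hR h
  rw [hx] at this; linarith

lemma le_nat (hg : GoodFun R le f a g) {x : R} {p : ℕ} (h : le x (p : R)) : g x ≤ p := by
  have := hg.mono x _ h
  rwa [hg.gnat] at this

end GoodFun

lemma exists_nat_le {R : Type} [CommSemiring R] {le : R → R → Prop}
    (hR : IsStrassenPreorder R le) (x : R) : ∃ p : ℕ, le x (p : R) := by
  by_cases hx : x = 0
  · exact ⟨0, by rw [hx]; exact hR.zero_le _⟩
  · obtain ⟨n, _, h⟩ := hR.arch x hx
    exact ⟨n, h⟩

/-! ### The enlargement construction -/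

section Enlarge

variable {R : Type} [CommSemiring R] {le : R → R → Prop} {f : R → ℝ} {a : R} {g : R → ℝ}
variable (hR : IsStrassenPreorder R le) (hg : GoodFun R le f a g) {v : R} (hv : v ≠ 0)

/-- enlargement of `g` in direction `v`. -/
noncomputable def eFun (g : R → ℝ) (v : R) : R → ℝ :=
  fun b => sSup (Set.range fun m : ℕ => g (b * v ^ m) / g v ^ m)

section lemmas

include hR hg hv

lemma gv_pos : (0:ℝ) < g v := lt_of_lt_of_le one_pos (hg.ge_one hR hv)

lemma gvm_pos (m : ℕ) : (0:ℝ) < g v ^ m := pow_pos (gv_pos hR hg hv) m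

lemma eFun_term_bound {b : R} {p : ℕ} (hb : le b (p : R)) (m : ℕ) :
    g (b * v ^ m) ≤ p * g v ^ m := by
  have h1 : le (b * v ^ m) ((p : R) * v ^ m) := hR.mul_right _ _ _ hb
  have h2 := hg.mono _ _ h1
  rwa [hg.natmul p (v ^ m), hg.pow_eq m v] at h2

lemma eFun_bddAbove (b : R) :
    BddAbove (Set.range fun m : ℕ => g (b * v ^ m) / g v ^ m) := by
  obtain ⟨p, hp⟩ := exists_nat_le hR b
  refine ⟨p, ?_⟩
  rintro _ ⟨m, rfl⟩
  rw [div_le_iff₀ (gvm_pos hR hg hv m)]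
  exact eFun_term_bound hR hg hv hp m

lemma le_eFun (b : R) (m : ℕ) : g (b * v ^ m) / g v ^ m ≤ eFun g v b :=
  le_csSup (eFun_bddAbove hR hg hv b) ⟨m, rfl⟩

lemma g_le_eFun (b : R) : g b ≤ eFun g v b := by
  have h := le_eFun hR hg hv b 0
  simpa using h

lemma eFun_nonneg (b : R) : 0 ≤ eFun g v b :=
  le_trans (hg.nonneg b) (g_le_eFun hR hg hv b)

lemma eFun_term_le (b : R) (m : ℕ) : g (b * v ^ m) ≤ eFun g v b * g v ^ m :=
  (div_le_iff₀ (gvm_pos hR hg hv m)).1 (le_eFun hR hg hv b m)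

lemma eFun_one : eFun g v 1 = 1 := by
  have h : (Set.range fun m : ℕ => g (1 * v ^ m) / g v ^ m) = {1} := by
    have : (fun m : ℕ => g (1 * v ^ m) / g v ^ m) = fun _ => (1:ℝ) := by
      funext m
      rw [one_mul, hg.pow_eq m v, div_self (gvm_pos hR hg hv m).ne']
    rw [this, Set.range_const]
  rw [eFun, h, csSup_singleton]

lemma eFun_good (hva : ∀ m : ℕ, g (a * v ^ m) = g a * g v ^ m) :
    GoodFun R le f a (eFun g v) := by
  have hgv : (0:ℝ) < g v := gv_pos hR hg hv
  have hne : ∀ b : R, (Set.range fun m : ℕ => g (b * v ^ m) / g v ^ m).Nonempty :=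
    fun b => Set.range_nonempty _
  refine ⟨?_, ?_, ?_, ?_, ?_, ?_, ?_, ?_, ?_, ?_⟩
  · exact fun b => eFun_nonneg hR hg hv b
  · -- mono
    intro x y hxy
    apply csSup_le (hne x)
    rintro _ ⟨m, rfl⟩
    refine le_trans ?_ (le_eFun hR hg hv y m)
    exact div_le_div_of_nonneg_right (hg.mono _ _ (hR.mul_right _ _ _ hxy))
      (gvm_pos hR hg hv m).le
  · -- superadd
    intro x y
    apply sSup_add_le' (hne x) (hne y)
    rintro _ ⟨m, rfl⟩ _ ⟨m', rfl⟩
    have e1 : g (x * v ^ m) * g v ^ m' ≤ g (x * v ^ (m + m')) := by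
      have h := hg.supermul (x * v ^ m) (v ^ m')
      rw [hg.pow_eq m' v] at h
      calc g (x * v ^ m) * g v ^ m' ≤ g (x * v ^ m * v ^ m') := h
        _ = g (x * v ^ (m + m')) := by rw [mul_assoc, ← pow_add]
    have e2 : g (y * v ^ m') * g v ^ m ≤ g (y * v ^ (m + m')) := by
      have h := hg.supermul (y * v ^ m') (v ^ m)
      rw [hg.pow_eq m v] at h
      calc g (y * v ^ m') * g v ^ m ≤ g (y * v ^ m' * v ^ m) := h
        _ = g (y * v ^ (m + m')) := by rw [mul_assoc, ← pow_add, Nat.add_comm]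
    have e3 : g (x * v ^ (m + m')) + g (y * v ^ (m + m')) ≤ g ((x + y) * v ^ (m + m')) := by
      have h := hg.superadd (x * v ^ (m + m')) (y * v ^ (m + m'))
      rwa [← add_mul] at h
    have e4 : g ((x + y) * v ^ (m + m')) ≤ eFun g v (x + y) * g v ^ (m + m') :=
      eFun_term_le hR hg hv _ _
    have hm : (0:ℝ) < g v ^ m := gvm_pos hR hg hv m
    have hm' : (0:ℝ) < g v ^ m' := gvm_pos hR hg hv m'
    rw [div_add_div _ _ hm.ne' hm'.ne', div_le_iff₀ (mul_pos hm hm')]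
    calc g (x * v ^ m) * g v ^ m' + g v ^ m * g (y * v ^ m')
        ≤ g (x * v ^ (m + m')) + g (y * v ^ (m + m')) := by
          refine add_le_add e1 ?_
          calc g v ^ m * g (y * v ^ m') = g (y * v ^ m') * g v ^ m := by ring
            _ ≤ g (y * v ^ (m + m')) := e2
      _ ≤ g ((x + y) * v ^ (m + m')) := e3
      _ ≤ eFun g v (x + y) * g v ^ (m + m') := e4
      _ = eFun g v (x + y) * (g v ^ m * g v ^ m') := by rw [pow_add]
  · -- supermul
    intro x y
    apply sSup_mul_le' (hne x) (hne y) (eFun_bddAbove hR hg hv y)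
    · rintro _ ⟨m, rfl⟩; exact div_nonneg (hg.nonneg _) (gvm_pos hR hg hv m).le
    · rintro _ ⟨m, rfl⟩; exact div_nonneg (hg.nonneg _) (gvm_pos hR hg hv m).le
    · exact eFun_nonneg hR hg hv _
    · rintro _ ⟨m, rfl⟩ _ ⟨m', rfl⟩
      rw [div_mul_div_comm, ← pow_add]
      refine le_trans ?_ (le_eFun hR hg hv (x * y) (m + m'))
      refine div_le_div_of_nonneg_right ?_ (gvm_pos hR hg hv (m + m')).le
      calc g (x * v ^ m) * g (y * v ^ m') ≤ g (x * v ^ m * (y * v ^ m')) := hg.supermul _ _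
        _ = g (x * y * v ^ (m + m')) := by rw [pow_add]; ring_nf
  · -- natmul
    intro p x
    have hfun : (fun m : ℕ => g ((p : R) * x * v ^ m) / g v ^ m)
        = (fun t => (p:ℝ) * t) ∘ (fun m : ℕ => g (x * v ^ m) / g v ^ m) := by
      funext m
      show g ((p : R) * x * v ^ m) / g v ^ m = (p:ℝ) * (g (x * v ^ m) / g v ^ m)
      rw [mul_assoc, hg.natmul p (x * v ^ m), mul_div_assoc]
    have himg : (Set.range fun m : ℕ => g ((p : R) * x * v ^ m) / g v ^ m)
        = (fun t => (p:ℝ) * t) '' (Set.range fun m : ℕ => g (x * v ^ m) / g v ^ m) := by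
      rw [hfun, Set.range_comp]
    rw [eFun, himg, sSup_const_mul' (hne x) (eFun_bddAbove hR hg hv x) (by positivity)]
    rfl
  · -- pow_le
    intro q x
    match q with
    | 0 =>
      rw [pow_zero, pow_zero, eFun_one hR hg hv]
    | (q+1) =>
      apply csSup_le (hne _)
      rintro _ ⟨m, rfl⟩
      rw [div_le_iff₀ (gvm_pos hR hg hv m)]
      -- key chain
      have hj : m + q * m = (q + 1) * m := by ring
      have c1 : g (x ^ (q+1) * v ^ m) * g v ^ (q * m) ≤ g (x ^ (q+1) * v ^ ((q+1) * m)) := by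
        have h := hg.supermul (x ^ (q+1) * v ^ m) (v ^ (q * m))
        rw [hg.pow_eq (q * m) v] at h
        calc g (x ^ (q+1) * v ^ m) * g v ^ (q * m)
            ≤ g (x ^ (q+1) * v ^ m * v ^ (q * m)) := h
          _ = g (x ^ (q+1) * v ^ ((q+1) * m)) := by rw [mul_assoc, ← pow_add, hj]
      have c2 : x ^ (q+1) * v ^ ((q+1) * m) = (x * v ^ m) ^ (q+1) := by
        rw [mul_pow, ← pow_mul, Nat.mul_comm]
      have c3 : g ((x * v ^ m) ^ (q+1)) ≤ (eFun g v x * g v ^ m) ^ (q+1) := by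
        refine le_trans (hg.pow_le _ _) ?_
        exact pow_le_pow_left₀ (hg.nonneg _) (eFun_term_le hR hg hv x m) _
      have c4 : g (x ^ (q+1) * v ^ m) * g v ^ (q * m)
          ≤ eFun g v x ^ (q+1) * g v ^ m * g v ^ (q * m) := by
        calc g (x ^ (q+1) * v ^ m) * g v ^ (q * m)
            ≤ g (x ^ (q+1) * v ^ ((q+1) * m)) := c1
          _ = g ((x * v ^ m) ^ (q+1)) := by rw [c2]
          _ ≤ (eFun g v x * g v ^ m) ^ (q+1) := c3
          _ = eFun g v x ^ (q+1) * g v ^ (m * (q+1)) := by rw [mul_pow, ← pow_mul]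
          _ = eFun g v x ^ (q+1) * g v ^ m * g v ^ (q * m) := by
              rw [mul_assoc, ← pow_add]
              congr 2
              ring
      exact le_of_mul_le_mul_right c4 (gvm_pos hR hg hv (q * m))
  · -- gone
    exact eFun_one hR hg hv
  · -- dom
    intro s t ε hε
    by_cases hz : eFun g v (s + t) = 0
    · refine ⟨1, fun n hn => ⟨0, Nat.zero_le n, ?_⟩⟩
      rw [hz, zero_pow (by omega : n ≠ 0), mul_zero]
      have := eFun_nonneg hR hg hv (s ^ 0 * t ^ (n - 0))
      positivity
    · have hpos : 0 < eFun g v (s + t) :=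
        lt_of_le_of_ne (eFun_nonneg hR hg hv _) (Ne.symm hz)
      have hlt1 : (2:ℝ) ^ (-(ε/2)) < 1 :=
        Real.rpow_lt_one_of_one_lt_of_neg (by norm_num) (by linarith)
      have hlt : (2:ℝ) ^ (-(ε/2)) * eFun g v (s + t) < eFun g v (s + t) := by
        nlinarith [hpos]
      obtain ⟨w, hw, hwlt⟩ := exists_lt_of_lt_csSup (hne (s + t)) hlt
      obtain ⟨r, rfl⟩ := hw
      obtain ⟨N, hN⟩ := hg.dom (s * v ^ r) (t * v ^ r) (ε/2) (by linarith)
      refine ⟨N, fun n hn => ?_⟩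
      obtain ⟨k, hk, hineq⟩ := hN n hn
      refine ⟨k, hk, ?_⟩
      -- identities
      have hid1 : s * v ^ r + t * v ^ r = (s + t) * v ^ r := by ring
      have hid2 : (s * v ^ r) ^ k * (t * v ^ r) ^ (n - k) = s ^ k * t ^ (n - k) * v ^ (r * n) := by
        rw [mul_pow, mul_pow, ← pow_mul, ← pow_mul]
        have : v ^ (r * k) * v ^ (r * (n - k)) = v ^ (r * n) := by
          rw [← pow_add, ← Nat.mul_add]
          congr 2
          omega
        calc s ^ k * v ^ (r * k) * (t ^ (n - k) * v ^ (r * (n - k)))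
            = s ^ k * t ^ (n - k) * (v ^ (r * k) * v ^ (r * (n - k))) := by ring
          _ = s ^ k * t ^ (n - k) * v ^ (r * n) := by rw [this]
      rw [hid1, hid2] at hineq
      have h3 : g (s ^ k * t ^ (n - k) * v ^ (r * n))
          ≤ eFun g v (s ^ k * t ^ (n - k)) * g v ^ (r * n) := eFun_term_le hR hg hv _ _
      have hvrn : (0:ℝ) < g v ^ (r * n) := gvm_pos hR hg hv (r * n)
      have hu : g ((s + t) * v ^ r) = (g ((s + t) * v ^ r) / g v ^ r) * g v ^ r := by
        field_simp
      -- main chain, multiplied by g v ^ (r * n)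
      have main : (2:ℝ) ^ (-(ε * n)) * eFun g v (s + t) ^ n * g v ^ (r * n)
          ≤ (n.choose k : ℝ) * eFun g v (s ^ k * t ^ (n - k)) * g v ^ (r * n) := by
        have e1 : (2:ℝ) ^ (-(ε * n)) * eFun g v (s + t) ^ n * g v ^ (r * n)
            = (2:ℝ) ^ (-(ε/2 * n)) * ((2:ℝ) ^ (-(ε/2)) * eFun g v (s + t)) ^ n
              * g v ^ (r * n) := by
          rw [← rpow_half_mul' ε n, mul_pow]
          ring
        have e2 : ((2:ℝ) ^ (-(ε/2)) * eFun g v (s + t)) ^ n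
            ≤ (g ((s + t) * v ^ r) / g v ^ r) ^ n := by
          apply pow_le_pow_left₀ (by positivity) hwlt.le
        have e3 : (2:ℝ) ^ (-(ε/2 * n)) * (g ((s + t) * v ^ r) / g v ^ r) ^ n * g v ^ (r * n)
            = (2:ℝ) ^ (-(ε/2 * n)) * g ((s + t) * v ^ r) ^ n := by
          rw [div_pow, pow_mul]
          field_simp
        calc (2:ℝ) ^ (-(ε * n)) * eFun g v (s + t) ^ n * g v ^ (r * n)
            = (2:ℝ) ^ (-(ε/2 * n)) * ((2:ℝ) ^ (-(ε/2)) * eFun g v (s + t)) ^ n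
              * g v ^ (r * n) := e1
          _ ≤ (2:ℝ) ^ (-(ε/2 * n)) * (g ((s + t) * v ^ r) / g v ^ r) ^ n * g v ^ (r * n) := by
              have h2p : (0:ℝ) < (2:ℝ) ^ (-(ε/2 * (n:ℝ))) := Real.rpow_pos_of_pos (by norm_num) _
              have := mul_le_mul_of_nonneg_left e2 h2p.le
              nlinarith [hvrn]
          _ = (2:ℝ) ^ (-(ε/2 * n)) * g ((s + t) * v ^ r) ^ n := e3
          _ ≤ (n.choose k : ℝ) * g (s ^ k * t ^ (n - k) * v ^ (r * n)) := hineq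
          _ ≤ (n.choose k : ℝ) * (eFun g v (s ^ k * t ^ (n - k)) * g v ^ (r * n)) := by
              have hc : (0:ℝ) ≤ (n.choose k : ℝ) := Nat.cast_nonneg _
              exact mul_le_mul_of_nonneg_left h3 hc
          _ = (n.choose k : ℝ) * eFun g v (s ^ k * t ^ (n - k)) * g v ^ (r * n) := by ring
      exact le_of_mul_le_mul_right main hvrn
  · -- ge_f
    exact fun x => le_trans (hg.ge_f x) (g_le_eFun hR hg hv x)
  · -- at_a
    have h : (Set.range fun m : ℕ => g (a * v ^ m) / g v ^ m) = {g a} := by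
      have : (fun m : ℕ => g (a * v ^ m) / g v ^ m) = fun _ => g a := by
        funext m
        rw [hva m, mul_div_assoc, div_self (gvm_pos hR hg hv m).ne', mul_one]
      rw [this, Set.range_const]
    rw [eFun, h, csSup_singleton]
    exact hg.at_a

end lemmas

end Enlarge

/-! ### Chains have upper bounds in the class -/

section Chain

variable {R : Type} [CommSemiring R] {le : R → R → Prop} {f : R → ℝ} {a : R}

lemma chain_ub (hR : IsStrassenPreorder R le) {c : Set (R → ℝ)}
    (hcS : c ⊆ {g | GoodFun R le f a g}) (hc : IsChain (· ≤ ·) c) {y : R → ℝ} (hy : y ∈ c) :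
    ∃ ub ∈ {g | GoodFun R le f a g}, ∀ z ∈ c, z ≤ ub := by
  classical
  let G : R → ℝ := fun x => sSup ((fun g => g x) '' c)
  have hyG : GoodFun R le f a y := hcS hy
  have hne : ∀ x : R, ((fun g => g x) '' c).Nonempty := fun x => ⟨y x, ⟨y, hy, rfl⟩⟩
  have hbdd : ∀ x : R, BddAbove ((fun g => g x) '' c) := by
    intro x
    obtain ⟨p, hp⟩ := exists_nat_le hR x
    exact ⟨p, by rintro _ ⟨g, hgc, rfl⟩; exact (hcS hgc).le_nat hp⟩
  have hub : ∀ z ∈ c, z ≤ G := by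
    intro z hz x
    exact le_csSup (hbdd x) ⟨z, hz, rfl⟩
  have hGle : ∀ (x : R) (C : ℝ), (∀ g' ∈ c, g' x ≤ C) → G x ≤ C := fun x C h =>
    csSup_le (hne x) (by rintro _ ⟨g, hgc, rfl⟩; exact h g hgc)
  have hGnonneg : ∀ x, 0 ≤ G x := fun x => le_trans (hyG.nonneg x) (hub y hy x)
  refine ⟨G, ?_, hub⟩
  refine ⟨hGnonneg, ?_, ?_, ?_, ?_, ?_, ?_, ?_, ?_, ?_⟩
  · -- mono
    intro x x' hxx'
    apply hGle
    intro g hgc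
    exact le_trans ((hcS hgc).mono _ _ hxx') (hub g hgc x')
  · -- superadd
    intro x x'
    apply sSup_add_le' (hne x) (hne x')
    rintro _ ⟨g1, h1, rfl⟩ _ ⟨g2, h2, rfl⟩
    rcases hc.total h1 h2 with h | h
    · calc g1 x + g2 x' ≤ g2 x + g2 x' := add_le_add_left (h x) _
        _ ≤ g2 (x + x') := (hcS h2).superadd x x'
        _ ≤ G (x + x') := hub g2 h2 _
    · calc g1 x + g2 x' ≤ g1 x + g1 x' := add_le_add_right (h x') _
        _ ≤ g1 (x + x') := (hcS h1).superadd x x'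
        _ ≤ G (x + x') := hub g1 h1 _
  · -- supermul
    intro x x'
    apply sSup_mul_le' (hne x) (hne x') (hbdd x')
    · rintro _ ⟨g, hgc, rfl⟩; exact (hcS hgc).nonneg x
    · rintro _ ⟨g, hgc, rfl⟩; exact (hcS hgc).nonneg x'
    · exact hGnonneg _
    · rintro _ ⟨g1, h1, rfl⟩ _ ⟨g2, h2, rfl⟩
      rcases hc.total h1 h2 with h | h
      · calc g1 x * g2 x' ≤ g2 x * g2 x' :=
              mul_le_mul_of_nonneg_right (h x) ((hcS h2).nonneg x')
          _ ≤ g2 (x * x') := (hcS h2).supermul x x'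
          _ ≤ G (x * x') := hub g2 h2 _
      · calc g1 x * g2 x' ≤ g1 x * g1 x' :=
              mul_le_mul_of_nonneg_left (h x') ((hcS h1).nonneg x)
          _ ≤ g1 (x * x') := (hcS h1).supermul x x'
          _ ≤ G (x * x') := hub g1 h1 _
  · -- natmul
    intro p x
    have himg : ((fun g : R → ℝ => g ((p:R) * x)) '' c)
        = (fun t => (p:ℝ) * t) '' ((fun g : R → ℝ => g x) '' c) := by
      rw [← Set.image_comp]
      apply Set.image_congr
      intro g hgc
      exact (hcS hgc).natmul p x
    show sSup _ = _
    rw [himg, sSup_const_mul' (hne x) (hbdd x) (by positivity)]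
  · -- pow_le
    intro q x
    apply hGle
    intro g hgc
    calc g (x ^ q) = g x ^ q := (hcS hgc).pow_eq q x
      _ ≤ G x ^ q := pow_le_pow_left₀ ((hcS hgc).nonneg x) (hub g hgc x) q
  · -- gone
    have himg : ((fun g : R → ℝ => g (1:R)) '' c) = {(1:ℝ)} := by
      rw [Set.image_congr (fun g hgc => (hcS hgc).gone)]
      exact Set.Nonempty.image_const ⟨y, hy⟩ 1
    show sSup _ = 1
    rw [himg, csSup_singleton]
  · -- dom
    intro s t ε hε
    by_cases hz : G (s + t) = 0
    · refine ⟨1, fun n hn => ⟨0, Nat.zero_le n, ?_⟩⟩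
      rw [hz, zero_pow (by omega : n ≠ 0), mul_zero]
      exact mul_nonneg (Nat.cast_nonneg _) (hGnonneg _)
    · have hpos : 0 < G (s + t) := lt_of_le_of_ne (hGnonneg _) (Ne.symm hz)
      have hlt1 : (2:ℝ) ^ (-(ε/2)) < 1 :=
        Real.rpow_lt_one_of_one_lt_of_neg (by norm_num) (by linarith)
      have hlt : (2:ℝ) ^ (-(ε/2)) * G (s + t) < G (s + t) := by
        have := mul_lt_mul_of_pos_right hlt1 hpos
        rwa [one_mul] at this
      obtain ⟨w, hw, hwlt⟩ := exists_lt_of_lt_csSup (hne (s + t)) hlt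
      obtain ⟨g0, hg0c, rfl⟩ := hw
      obtain ⟨N, hN⟩ := (hcS hg0c).dom s t (ε/2) (by linarith)
      refine ⟨N, fun n hn => ?_⟩
      obtain ⟨k, hk, hineq⟩ := hN n hn
      refine ⟨k, hk, ?_⟩
      calc (2:ℝ) ^ (-(ε * (n:ℝ))) * G (s + t) ^ n
          = (2:ℝ) ^ (-(ε/2 * (n:ℝ))) * ((2:ℝ) ^ (-(ε/2)) * G (s + t)) ^ n := by
            rw [← rpow_half_mul' ε n, mul_pow]; ring
        _ ≤ (2:ℝ) ^ (-(ε/2 * (n:ℝ))) * g0 (s + t) ^ n := by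
            have h2p : (0:ℝ) ≤ (2:ℝ) ^ (-(ε/2 * (n:ℝ))) :=
              (Real.rpow_pos_of_pos (by norm_num) _).le
            refine mul_le_mul_of_nonneg_left ?_ h2p
            refine pow_le_pow_left₀ ?_ hwlt.le n
            have h2q : (0:ℝ) ≤ (2:ℝ) ^ (-(ε/2)) := (Real.rpow_pos_of_pos (by norm_num) _).le
            exact mul_nonneg h2q (hGnonneg _)
        _ ≤ (n.choose k : ℝ) * g0 (s ^ k * t ^ (n - k)) := hineq
        _ ≤ (n.choose k : ℝ) * G (s ^ k * t ^ (n - k)) :=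
            mul_le_mul_of_nonneg_left (hub g0 hg0c _) (Nat.cast_nonneg _)
  · -- ge_f
    intro x
    exact le_trans (hyG.ge_f x) (hub y hy x)
  · -- at_a
    have himg : ((fun g : R → ℝ => g a) '' c) = {f a} := by
      rw [Set.image_congr (fun g hgc => (hcS hgc).at_a)]
      exact Set.Nonempty.image_const ⟨y, hy⟩ _
    show sSup _ = f a
    rw [himg, csSup_singleton]

end Chain

/-- a nonnegative function `f` on a Strassen preordered commutative semiring
that is monotone, superadditive, supermultiplicative, monomially homogeneous and monomially
dominant is a pointwise-attained minimum of the spectral points dominating it. -/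
theorem statement19 (R : Type) [CommSemiring R] (le : R → R → Prop)
    (hR : IsStrassenPreorder R le) (f : R → ℝ) (hf0 : ∀ a, 0 ≤ f a)
    (hmono : ∀ a b, le a b → f a ≤ f b)
    (hsuperadd : ∀ a b, f a + f b ≤ f (a + b))
    (hsupermul : ∀ a b, f a * f b ≤ f (a * b))
    (hmonhom : ∀ (m n : ℕ) (a : R), f ((m : R) * a ^ n) = (m : ℝ) * (f a) ^ n)
    (hdom : ∀ s t : R, ∀ ε : ℝ, 0 < ε → ∃ N : ℕ, ∀ n : ℕ, N ≤ n → ∃ k ≤ n,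
      (2 : ℝ) ^ (-(ε * (n : ℝ))) * (f (s + t)) ^ n
        ≤ (n.choose k : ℝ) * f (s ^ k * t ^ (n - k))) :
    ∀ a : R, ∃ φ : R → ℝ, IsSpectralPoint R le φ ∧ (∀ b, f b ≤ φ b) ∧ φ a = f a := by
  intro a
  have hf : GoodFun R le f a f :=
    { nonneg := hf0
      mono := hmono
      superadd := hsuperadd
      supermul := hsupermul
      natmul := fun p x => by have h := hmonhom p 1 x; simpa using h
      pow_le := fun q x => by
        have h := hmonhom 1 q x
        simp only [Nat.cast_one, one_mul] at h
        exact le_of_eq h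
      gone := by have h := hmonhom 1 0 1; simpa using h
      dom := hdom
      ge_f := fun x => le_refl _
      at_a := rfl }
  obtain ⟨gm, hfgm, hmax⟩ := zorn_le_nonempty₀ {g : R → ℝ | GoodFun R le f a g}
    (fun c hcS hc y hy => chain_ub hR hcS hc hy) f hf
  have hgm : GoodFun R le f a gm := hmax.1
  -- the maximal element is multiplicative
  have hmul : ∀ x y : R, gm (x * y) = gm x * gm y := by
    intro x y
    by_contra hne0
    have hlt : gm x * gm y < gm (x * y) :=
      lt_of_le_of_ne (hgm.supermul x y) (fun h => hne0 h.symm)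
    have hy0 : y ≠ 0 := by
      rintro rfl
      simp [hgm.gzero] at hlt
    have hgy : 0 < gm y := lt_of_lt_of_le one_pos (hgm.ge_one hR hy0)
    by_cases hcase : ∀ m : ℕ, gm (a * y ^ m) = gm a * gm y ^ m
    · have hE : GoodFun R le f a (eFun gm y) := eFun_good hR hgm hy0 hcase
      have hle : gm ≤ eFun gm y := fun b => g_le_eFun hR hgm hy0 b
      have heq : eFun gm y ≤ gm := hmax.2 hE hle
      have h1 : gm (x * y ^ 1) / gm y ^ 1 ≤ eFun gm y x := le_eFun hR hgm hy0 x 1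
      rw [pow_one, pow_one] at h1
      have h2 : gm x < gm (x * y) / gm y := (lt_div_iff₀ hgy).2 hlt
      have h3 := le_trans h1 (heq x)
      linarith
    · push_neg at hcase
      obtain ⟨m₀, hm₀⟩ := hcase
      have hstrict : gm a * gm y ^ m₀ < gm (a * y ^ m₀) := by
        refine lt_of_le_of_ne ?_ (fun h => hm₀ h.symm)
        have h := hgm.supermul a (y ^ m₀)
        rwa [hgm.pow_eq m₀ y] at h
      have ha0 : a ≠ 0 := by
        rintro rfl
        simp [hgm.gzero] at hstrict
      have hga : 0 < gm a := lt_of_lt_of_le one_pos (hgm.ge_one hR ha0)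
      have hva : ∀ m : ℕ, gm (a * a ^ m) = gm a * gm a ^ m := by
        intro m
        rw [← pow_succ', hgm.pow_eq, pow_succ']
      have hE : GoodFun R le f a (eFun gm a) := eFun_good hR hgm ha0 hva
      have hle : gm ≤ eFun gm a := fun b => g_le_eFun hR hgm ha0 b
      have heq : eFun gm a ≤ gm := hmax.2 hE hle
      have h1 : gm (y ^ m₀ * a ^ 1) / gm a ^ 1 ≤ eFun gm a (y ^ m₀) :=
        le_eFun hR hgm ha0 (y ^ m₀) 1
      rw [pow_one, pow_one] at h1
      have h2 : gm (y ^ m₀) * gm a < gm (y ^ m₀ * a) := by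
        rw [hgm.pow_eq, mul_comm (y ^ m₀) a, mul_comm (gm y ^ m₀) (gm a)]
        exact hstrict
      have h3 := le_trans h1 (heq (y ^ m₀))
      have h4 : gm (y ^ m₀ * a) ≤ gm (y ^ m₀) * gm a := (div_le_iff₀ hga).1 h3
      linarith
  -- the maximal element is additive
  have hadd : ∀ x y : R, gm (x + y) = gm x + gm y := by
    intro x y
    refine le_antisymm ?_ (hgm.superadd x y)
    by_contra hne0
    push_neg at hne0
    have hB0 : 0 ≤ gm x + gm y := add_nonneg (hgm.nonneg x) (hgm.nonneg y)
    have hBpos : 0 < gm x + gm y := by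
      rcases eq_or_lt_of_le hB0 with h0 | h
      · exfalso
        have hx : gm x = 0 := by linarith [hgm.nonneg x, hgm.nonneg y]
        have hyy : gm y = 0 := by linarith [hgm.nonneg x, hgm.nonneg y]
        have hx0 : x = 0 := hgm.eq_zero_of_g_eq_zero hR hx
        have hy0 : y = 0 := hgm.eq_zero_of_g_eq_zero hR hyy
        rw [hx0, hy0] at hne0
        simp [hgm.gzero] at hne0
      · exact h
    have hApos : 0 < gm (x + y) := lt_trans hBpos hne0
    have hABq : 1 < gm (x + y) / (gm x + gm y) := (one_lt_div hBpos).2 hne0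
    have hlogpos : 0 < Real.logb 2 (gm (x + y) / (gm x + gm y)) :=
      Real.logb_pos (by norm_num) hABq
    set ε := Real.logb 2 (gm (x + y) / (gm x + gm y)) / 2 with hεdef
    have hε : 0 < ε := by positivity
    have h2ε : (2:ℝ) ^ ε * (gm x + gm y) < gm (x + y) := by
      have he1 : (2:ℝ) ^ (Real.logb 2 (gm (x + y) / (gm x + gm y)))
          = gm (x + y) / (gm x + gm y) :=
        Real.rpow_logb (by norm_num) (by norm_num) (by positivity)
      have he2 : (2:ℝ) ^ ε < (2:ℝ) ^ (Real.logb 2 (gm (x + y) / (gm x + gm y))) :=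
        Real.rpow_lt_rpow_of_exponent_lt (by norm_num) (by rw [hεdef]; linarith)
      rw [he1] at he2
      calc (2:ℝ) ^ ε * (gm x + gm y) < (gm (x + y) / (gm x + gm y)) * (gm x + gm y) :=
            mul_lt_mul_of_pos_right he2 hBpos
        _ = gm (x + y) := by field_simp
    obtain ⟨N, hN⟩ := hgm.dom x y ε hε
    obtain ⟨k, hk, hineq⟩ := hN (N + 1) (by omega)
    have hmeq : gm (x ^ k * y ^ (N + 1 - k)) = gm x ^ k * gm y ^ (N + 1 - k) := by
      rw [hmul (x ^ k) (y ^ (N + 1 - k)), hgm.pow_eq, hgm.pow_eq]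
    rw [hmeq] at hineq
    have h5 : ((N + 1).choose k : ℝ) * (gm x ^ k * gm y ^ (N + 1 - k))
        ≤ (gm x + gm y) ^ (N + 1) :=
      choose_mul_le_add_pow' (hgm.nonneg x) (hgm.nonneg y) hk
    have h6 : (2:ℝ) ^ (-(ε * ((N+1:ℕ):ℝ))) * gm (x + y) ^ (N + 1)
        ≤ (gm x + gm y) ^ (N + 1) := le_trans hineq h5
    have h7 : gm (x + y) ^ (N + 1) ≤ ((2:ℝ) ^ ε * (gm x + gm y)) ^ (N + 1) := by
      have hpow : ((2:ℝ) ^ ε) ^ (N + 1) = (2:ℝ) ^ (ε * (((N+1:ℕ)):ℝ)) := by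
        rw [← Real.rpow_natCast ((2:ℝ) ^ ε) (N + 1),
          ← Real.rpow_mul (by norm_num : (0:ℝ) ≤ 2)]
      rw [mul_pow, hpow]
      have hc : (0:ℝ) < (2:ℝ) ^ (ε * (((N+1:ℕ)):ℝ)) :=
        Real.rpow_pos_of_pos (by norm_num) _
      calc gm (x + y) ^ (N + 1)
          = (2:ℝ) ^ (ε * (((N+1:ℕ)):ℝ))
            * ((2:ℝ) ^ (-(ε * (((N+1:ℕ)):ℝ))) * gm (x + y) ^ (N + 1)) := by
            rw [← mul_assoc, ← Real.rpow_add (by norm_num : (0:ℝ) < 2)]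
            simp
        _ ≤ (2:ℝ) ^ (ε * (((N+1:ℕ)):ℝ)) * (gm x + gm y) ^ (N + 1) :=
            mul_le_mul_of_nonneg_left h6 hc.le
    have h8 : gm (x + y) ≤ (2:ℝ) ^ ε * (gm x + gm y) := by
      refine le_of_pow_le_pow_left₀ (by omega : N + 1 ≠ 0) ?_ h7
      have h2p : (0:ℝ) ≤ (2:ℝ) ^ ε := (Real.rpow_pos_of_pos (by norm_num) _).le
      exact mul_nonneg h2p hB0
    linarith
  exact ⟨gm, ⟨hgm.nonneg, hgm.gone, hadd, hmul, hgm.mono⟩, hgm.ge_f, hgm.at_a⟩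

end Paper
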